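/- Let X be the semilattice of all functions f : ω → {0,1,2} with nonempty finite support f⁻¹({0,1}), under coordinatewise minimum. For any a, b ∈ X and any sequence s in X of the form s_n = 𝟎_{2^k 3^n} or s_n = 𝟏_{2^k 3^n} (k fixed), the set {n ∈ ω : a·s_n = b} is finite. -/

import Mathlib

/-- Elements of `{0,1,2}^ω` with finite nonempty support `f⁻¹({0,1}) = {i | f i ≠ 2}`. -/
def SL : Type :=
  {f : ℕ → Fin 3 // {i : ℕ | f i ≠ 2}.Finite ∧ {i : ℕ | f i ≠ 2}.Nonempty}

private lemma min_eq_two_iff : ∀ x y : Fin 3, min x y = 2 ↔ x = 2 ∧ y = 2 := by decide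

/-- Coordinatewise minimum on `SL`. -/
def SLmul (f g : SL) : SL :=
  ⟨fun i => min (f.1 i) (g.1 i), by
    constructor
    · apply (f.2.1.union g.2.1).subset
      intro i hi
      simp only [Set.mem_setOf_eq, Set.mem_union] at hi ⊢
      by_contra h
      push_neg at h
      exact hi ((min_eq_two_iff _ _).2 ⟨h.1, h.2⟩)
    · obtain ⟨i, hi⟩ := f.2.2
      exact ⟨i, fun h => hi ((min_eq_two_iff _ _).1 h).1⟩⟩

/-- The element `𝟎_n` taking value `0` at `n` and `2` elsewhere. -/
def zeroEl (n : ℕ) : SL :=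
  ⟨fun i => if i = n then 0 else 2, by
    have h : {i : ℕ | (if i = n then (0 : Fin 3) else 2) ≠ 2} = {n} := by
      ext i
      by_cases hi : i = n <;> simp [hi]
    constructor
    · rw [h]; exact Set.finite_singleton n
    · rw [h]; exact ⟨n, rfl⟩⟩

/-- The element `𝟏_n` taking value `1` at `n` and `2` elsewhere. -/
def oneEl (n : ℕ) : SL :=
  ⟨fun i => if i = n then 1 else 2, by
    have h : {i : ℕ | (if i = n then (1 : Fin 3) else 2) ≠ 2} = {n} := by
      ext i
      by_cases hi : i = n <;> simp [hi]
    constructor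
    · rw [h]; exact Set.finite_singleton n
    · rw [h]; exact ⟨n, rfl⟩⟩

/-- In the semilattice `SL`, for any `a b : SL` and any sequence `s` of the form
`s n = 𝟎_{2^k 3^n}` or `s n = 𝟏_{2^k 3^n}` (for a fixed `k`), the set
`{n | a · s n = b}` is finite. -/
theorem stmt17 (a b : SL) (k : ℕ) (s : ℕ → SL)
    (hs : (∀ n : ℕ, s n = zeroEl (2 ^ k * 3 ^ n)) ∨
          (∀ n : ℕ, s n = oneEl (2 ^ k * 3 ^ n))) :
    {n : ℕ | SLmul a (s n) = b}.Finite := by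
  set p : ℕ → ℕ := fun n => 2 ^ k * 3 ^ n with hp
  have hpmono : StrictMono p := fun m n h =>
    Nat.mul_lt_mul_of_le_of_lt (le_refl (2 ^ k)) (Nat.pow_lt_pow_right (by norm_num) h)
      (pow_pos (by norm_num) k)
  have key : ∀ n, (s n).1 (p n) ≠ 2 ∧ ∀ i, i ≠ p n → (s n).1 i = 2 := by
    rcases hs with h | h <;> intro n <;> rw [h n] <;>
      exact ⟨by simp [zeroEl, oneEl, hp], fun i hi => by simp [zeroEl, oneEl, hp, hi]; exact hi⟩
  have hmin2 : ∀ x : Fin 3, min x 2 = x := by decide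
  rw [← Set.not_infinite]
  intro hinf
  have hsub : {n : ℕ | SLmul a (s n) = b} ⊆ p ⁻¹' {i : ℕ | a.1 i ≠ 2} := by
    intro n hn
    obtain ⟨m, hm'⟩ := (hinf.diff (Set.finite_singleton n)).nonempty
    have hm : SLmul a (s m) = b := hm'.1
    have hmn : m ≠ n := by simpa using hm'.2
    have e1 : min (a.1 (p n)) ((s n).1 (p n)) = b.1 (p n) := congrArg (fun x => x.1 (p n)) hn
    have e2 : min (a.1 (p n)) ((s m).1 (p n)) = b.1 (p n) := congrArg (fun x => x.1 (p n)) hm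
    have hne : p n ≠ p m := fun h => hmn (hpmono.injective h.symm)
    rw [(key m).2 (p n) hne, hmin2] at e2
    intro h2
    rw [h2] at e2
    rw [← e2] at e1
    exact (key n).1 ((min_eq_two_iff _ _).1 e1).2
  exact hinf ((a.2.1.preimage (hpmono.injective.injOn)).subset hsub)
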